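/- arXiv:2006.04040 — 6 statements merged into one kernel-verified Lean document; each statement's English description precedes it below -/
import Mathlib

section
/- Let R : Fin 4 → Fin 4 → Fin 4 → Fin 4 → ℝ be a curvature-type tensor, F : Fin 4 → Fin 4 → ℝ antisymmetric, and define R'^d_{cab} = R^d_{cab} + δ^d_c F_{ab}. Let g be a symmetric invertible 4×4 real matrix with inverse entries g^{ab}. Define the Hilbert tensor τ_{ab} = ½( ∑_{d,c,r} g_{bd} g^{rc} R^d_{car} + ∑_r R^r_{bra} ) - ½ R g_{ab}, where R = ∑_{a,b,c} g^{ab} R^c_{acb} is the scalar curvature, and define τ'_{ab} analogously from R'. Then τ'_{ab} = τ_{ab} for all a, b. -/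
/-- Projective invariance of the Hilbert tensor
`τ_{ab} = ½(R_b{}^r{}_{ar} + R^r{}_{bra}) - ½ R g_{ab}` under
`R'^d_{cab} = R^d_{cab} + δ^d_c F_{ab}` with `F` antisymmetric. -/
theorem projective_invariance_hilbert_tensor
    (R : Fin 4 → Fin 4 → Fin 4 → Fin 4 → ℝ)
    (F : Fin 4 → Fin 4 → ℝ) (hF : ∀ a b, F a b = - F b a)
    (R' : Fin 4 → Fin 4 → Fin 4 → Fin 4 → ℝ)
    (hR' : ∀ d c a b, R' d c a b = R d c a b + (if d = c then (1:ℝ) else 0) * F a b)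
    (g ginv : Fin 4 → Fin 4 → ℝ)
    (hg : ∀ a b, g a b = g b a)
    (hginv : ∀ a b, ginv a b = ginv b a)
    (hinv : ∀ a b, ∑ c, g a c * ginv c b = if a = b then (1:ℝ) else 0)
    (scal scal' : ℝ)
    (hscal : scal = ∑ a, ∑ b, ∑ c, ginv a b * R c a c b)
    (hscal' : scal' = ∑ a, ∑ b, ∑ c, ginv a b * R' c a c b)
    (τ τ' : Fin 4 → Fin 4 → ℝ)
    (hτ : ∀ a b, τ a b =
      1/2 * ((∑ d, ∑ c, ∑ r, g b d * ginv r c * R d c a r) + ∑ r, R r b r a)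
        - 1/2 * scal * g a b)
    (hτ' : ∀ a b, τ' a b =
      1/2 * ((∑ d, ∑ c, ∑ r, g b d * ginv r c * R' d c a r) + ∑ r, R' r b r a)
        - 1/2 * scal' * g a b) :
    ∀ a b, τ' a b = τ a b := by
  have hzero : (∑ x : Fin 4, ∑ y : Fin 4, ginv x y * F x y) = 0 := by
    have h1 : (∑ x : Fin 4, ∑ y : Fin 4, ginv x y * F x y)
        = -(∑ x : Fin 4, ∑ y : Fin 4, ginv x y * F x y) := by
      calc (∑ x : Fin 4, ∑ y : Fin 4, ginv x y * F x y)
          = ∑ y : Fin 4, ∑ x : Fin 4, ginv x y * F x y := Finset.sum_comm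
        _ = ∑ y : Fin 4, ∑ x : Fin 4, -(ginv y x * F y x) := by
            refine Finset.sum_congr rfl fun y _ => Finset.sum_congr rfl fun x _ => ?_
            rw [hginv x y, hF x y]; ring
        _ = -(∑ x : Fin 4, ∑ y : Fin 4, ginv x y * F x y) := by
            simp [Finset.sum_neg_distrib]
    linarith
  have hs : scal' = scal := by
    rw [hscal', hscal]
    have key : ∀ x y : Fin 4, (∑ c, ginv x y * R' c x c y)
        = (∑ c, ginv x y * R c x c y) + ginv x y * F x y := by
      intro x y
      simp only [hR', mul_add, Finset.sum_add_distrib]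
      congr 1
      simp [mul_ite, ite_mul, mul_zero, zero_mul, mul_one, Finset.sum_ite_eq']
    simp only [key, Finset.sum_add_distrib, hzero, add_zero]
  intro a b
  have e1 : (∑ d, ∑ c, ∑ r, g b d * ginv r c * R' d c a r)
      = (∑ d, ∑ c, ∑ r, g b d * ginv r c * R d c a r) + F a b := by
    simp only [hR', mul_add, Finset.sum_add_distrib]
    congr 1
    have step1 : ∀ d : Fin 4,
        (∑ c, ∑ r, g b d * ginv r c * ((if d = c then (1:ℝ) else 0) * F a r))
          = ∑ r, g b d * ginv r d * F a r := by
      intro d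
      rw [Finset.sum_comm]
      refine Finset.sum_congr rfl fun r _ => ?_
      simp [mul_ite, mul_zero, mul_one, Finset.sum_ite_eq, mul_assoc]
    simp only [step1]
    rw [Finset.sum_comm]
    have step2 : ∀ r : Fin 4,
        (∑ d, g b d * ginv r d * F a r) = (if b = r then (1:ℝ) else 0) * F a r := by
      intro r
      rw [← Finset.sum_mul, ← hinv b r]
      congr 1
      exact Finset.sum_congr rfl fun d _ => by rw [hginv r d]
    simp only [step2]
    simp [ite_mul, zero_mul, one_mul, Finset.sum_ite_eq]
  have e2 : (∑ r, R' r b r a) = (∑ r, R r b r a) - F a b := by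
    simp only [hR', Finset.sum_add_distrib]
    have : (∑ r, (if r = b then (1:ℝ) else 0) * F r a) = F b a := by
      simp [ite_mul, zero_mul, one_mul, Finset.sum_ite_eq']
    rw [this, hF b a]; ring
  rw [hτ', hτ, hs, e1, e2]; ring
end

section
/- Let g be a symmetric invertible 4×4 real matrix with inverse entries g^{ab}. Let T : Fin 4 → Fin 4 → Fin 4 → ℝ be antisymmetric in its last two indices (T^a_{bc} = -T^a_{cb}), let 𝒢 : Fin 4 → Fin 4 → Fin 4 → ℝ be symmetric in its first two indices, and let A : Fin 4 → Fin 4 → Fin 4 → ℝ be symmetric in its first two indices (A_{abc} = A_{bac}; the third index is the 1-form index). Write A^a_{bc} = ∑_d g^{ad} A_{dbc} and 𝒢^a_{bc} = ∑_d g^{ad} 𝒢_{dbc}. Define the amplified-transformed quantities T'^a_{bc} = T^a_{bc} + A^a_{cb} - A^a_{bc} and 𝒢'_{abc} = 𝒢_{abc} - 2 A_{abc}. Then the canonical torsion T^a_{bc} - ½(𝒢^a_{bc} - 𝒢^a_{cb}) is invariant: T'^a_{bc} - ½(𝒢'^a_{bc} - 𝒢'^a_{cb}) = T^a_{bc} -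 ½(𝒢^a_{bc} - 𝒢^a_{cb}) for all indices, and consequently its trace ∑_a [ T^a_{ac} - ½(𝒢^a_{ac} - 𝒢^a_{ca}) ] is invariant as well. -/
/-- Invariance of the canonical torsion `T^a_{bc} - 𝒢^a_{[bc]}` and of its trace under
the amplified transformation `T'^a_{bc} = T^a_{bc} + A^a_{cb} - A^a_{bc}`,
`𝒢'_{abc} = 𝒢_{abc} - 2 A_{abc}` with `A` symmetric in its first two indices. -/
theorem canonical_torsion_amplified_invariant
    (g ginv : Fin 4 → Fin 4 → ℝ)
    (hg : ∀ a b, g a b = g b a)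
    (hinv : ∀ a b, ∑ c, g a c * ginv c b = if a = b then (1:ℝ) else 0)
    (hinv' : ∀ a b, ∑ c, ginv a c * g c b = if a = b then (1:ℝ) else 0)
    (T : Fin 4 → Fin 4 → Fin 4 → ℝ)
    (hT : ∀ a b c, T a b c = - T a c b)
    (𝒢 : Fin 4 → Fin 4 → Fin 4 → ℝ)
    (h𝒢 : ∀ a b c, 𝒢 a b c = 𝒢 b a c)
    (A : Fin 4 → Fin 4 → Fin 4 → ℝ)
    (hA : ∀ a b c, A a b c = A b a c)
    (Aup : Fin 4 → Fin 4 → Fin 4 → ℝ)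
    (hAup : ∀ a b c, Aup a b c = ∑ d, ginv a d * A d b c)
    (𝒢up : Fin 4 → Fin 4 → Fin 4 → ℝ)
    (h𝒢up : ∀ a b c, 𝒢up a b c = ∑ d, ginv a d * 𝒢 d b c)
    (T' : Fin 4 → Fin 4 → Fin 4 → ℝ)
    (hT' : ∀ a b c, T' a b c = T a b c + Aup a c b - Aup a b c)
    (𝒢' : Fin 4 → Fin 4 → Fin 4 → ℝ)
    (h𝒢' : ∀ a b c, 𝒢' a b c = 𝒢 a b c - 2 * A a b c)
    (𝒢'up : Fin 4 → Fin 4 → Fin 4 → ℝ)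
    (h𝒢'up : ∀ a b c, 𝒢'up a b c = ∑ d, ginv a d * 𝒢' d b c) :
    (∀ a b c,
      T' a b c - 1/2 * (𝒢'up a b c - 𝒢'up a c b)
        = T a b c - 1/2 * (𝒢up a b c - 𝒢up a c b)) ∧
    (∀ c,
      (∑ a, (T' a a c - 1/2 * (𝒢'up a a c - 𝒢'up a c a)))
        = ∑ a, (T a a c - 1/2 * (𝒢up a a c - 𝒢up a c a))) := by
  have key : ∀ a b c, 𝒢'up a b c = 𝒢up a b c - 2 * Aup a b c := by
    intro a b c
    rw [h𝒢'up, h𝒢up, hAup, Finset.mul_sum, ← Finset.sum_sub_distrib]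
    refine Finset.sum_congr rfl fun d _ => ?_
    rw [h𝒢']; ring
  have main : ∀ a b c,
      T' a b c - 1/2 * (𝒢'up a b c - 𝒢'up a c b)
        = T a b c - 1/2 * (𝒢up a b c - 𝒢up a c b) := by
    intro a b c
    rw [hT', key, key]; ring
  exact ⟨main, fun c => Finset.sum_congr rfl fun a _ => main a a c⟩
end

section
/- Let n be a positive natural number, let η be a symmetric n×n real matrix, let H : ℝ → Matrix (Fin n) (Fin n) ℝ be differentiable with H(t)ᵀ · η · H(t) constant in t, and let ω : ℝ → Matrix (Fin n) (Fin n) ℝ be any matrix-valued function. Define ω̄(t) = H(t)ᵀ · η · H'(t) + H(t)ᵀ · ω(t) · H(t). Then for every t, ω̄(t) + ω̄(t)ᵀ = H(t)ᵀ · (ω(t) + ω(t)ᵀ) · H(t); that is, the symmetric part of ω̄ is the Hᵀ(·)H-transform of the symmetric part of ω. -/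
open Matrix

lemma entry_formula {n : ℕ} (A B C : Matrix (Fin n) (Fin n) ℝ) (i j : Fin n) :
    (Aᵀ * B * C) i j = ∑ k, ∑ l, A k i * B k l * C l j := by
  simp only [Matrix.mul_apply, Finset.sum_mul, transpose_apply]
  rw [Finset.sum_comm]

/-- The symmetric part of the transformed connection `ω̄ = Hᵀ η H' + Hᵀ ω H`
(with `Hᵀ η H` constant, η symmetric) is the `Hᵀ(·)H`-transform of the symmetric
part of `ω`. -/
theorem symmetric_part_transforms_as_tensor
    (n : ℕ) (hn : 0 < n)
    (η : Matrix (Fin n) (Fin n) ℝ) (hη : ηᵀ = η)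
    (H H' : ℝ → Matrix (Fin n) (Fin n) ℝ)
    (hderiv : ∀ i j t, HasDerivAt (fun s => H s i j) (H' t i j) t)
    (hconst : ∀ s t, (H s)ᵀ * η * H s = (H t)ᵀ * η * H t)
    (ω : ℝ → Matrix (Fin n) (Fin n) ℝ)
    (ωbar : ℝ → Matrix (Fin n) (Fin n) ℝ)
    (hωbar : ∀ t, ωbar t = (H t)ᵀ * η * H' t + (H t)ᵀ * ω t * H t) :
    ∀ t, ωbar t + (ωbar t)ᵀ = (H t)ᵀ * (ω t + (ω t)ᵀ) * H t := by
  intro t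
  -- key: (H')ᵀ η H + Hᵀ η H' = 0
  have key : (H' t)ᵀ * η * H t + (H t)ᵀ * η * H' t = 0 := by
    ext i j
    -- entry of constant function
    have hconstfun : (fun s => ((H s)ᵀ * η * H s) i j) = fun _ => ((H t)ᵀ * η * H t) i j := by
      funext s; rw [hconst s t]
    have h0 : HasDerivAt (fun s => ((H s)ᵀ * η * H s) i j) 0 t := by
      rw [hconstfun]; exact hasDerivAt_const _ _
    have h1 : HasDerivAt (fun s => ((H s)ᵀ * η * H s) i j)
        (((H' t)ᵀ * η * H t + (H t)ᵀ * η * H' t) i j) t := by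
      have : (fun s => ((H s)ᵀ * η * H s) i j)
          = fun s => ∑ k, ∑ l, H s k i * η k l * H s l j := by
        funext s; exact entry_formula (H s) η (H s) i j
      rw [this]
      have hsum : HasDerivAt (fun s => ∑ k, ∑ l, H s k i * η k l * H s l j)
          (∑ k, ∑ l, (H' t k i * η k l * H t l j + H t k i * η k l * H' t l j)) t := by
        apply HasDerivAt.fun_sum
        intro k _
        apply HasDerivAt.fun_sum
        intro l _
        have h1 := ((hderiv k i t).mul_const (η k l)).mul (hderiv l j t)
        exact h1
      convert hsum using 1
      rw [Matrix.add_apply, entry_formula (H' t) η (H t) i j,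
        entry_formula (H t) η (H' t) i j]
      rw [← Finset.sum_add_distrib]
      exact Finset.sum_congr rfl fun k _ => (Finset.sum_add_distrib).symm
    have := h1.unique h0
    simpa [Matrix.zero_apply] using this
  have htrans : ((H t)ᵀ * η * H' t)ᵀ = (H' t)ᵀ * η * H t := by
    simp [Matrix.transpose_mul, hη, Matrix.mul_assoc]
  have h2 : ((H t)ᵀ * ω t * H t)ᵀ = (H t)ᵀ * (ω t)ᵀ * H t := by
    simp [Matrix.transpose_mul, Matrix.mul_assoc]
  rw [hωbar t, Matrix.transpose_add, htrans, h2, Matrix.mul_add, Matrix.add_mul]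
  rw [show (H t)ᵀ * η * H' t + (H t)ᵀ * ω t * H t + ((H' t)ᵀ * η * H t + (H t)ᵀ * (ω t)ᵀ * H t)
      = ((H' t)ᵀ * η * H t + (H t)ᵀ * η * H' t) + ((H t)ᵀ * ω t * H t + (H t)ᵀ * (ω t)ᵀ * H t)
      from by abel, key, zero_add]
end

section
/- Let g be a symmetric invertible 4×4 real matrix with entries g_{ab} and inverse entries g^{ab} (also symmetric). Let Š : Fin 4 → Fin 4 → Fin 4 → ℝ and 𝒢̌ : Fin 4 → Fin 4 → Fin 4 → ℝ each be symmetric in their first two indices and g-traceless in their first two indices: Š^{mnh} = Š^{nmh}, ∑_{m,n} g_{mn} Š^{mnh} = 0, 𝒢̌^{abc} = 𝒢̌^{bac}, ∑_{a,b} g_{ab} 𝒢̌^{abc} = 0. Write u^m = ∑_{r,s} 𝒢̌^{mrs} g_{rs} and w^c = ∑_{r,s} Š^{crs} g_{rs}. Then the following are equivalent: (i) for all m, n, h: 2 Š^{mnh} = u^n g^{hm} + u^m g^{hn} - 𝒢̌^{hnm} - 𝒢̌^{hmn}; (ii) for all a, b, c: 𝒢̌^{abc} = - Š^{bca} - Š^{acb}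 + Š^{bac} + ½ w^c g^{ab}. -/
/-- Equivalence of the two forms of the dynamical equation relating shear
hypermomentum `Š^{mnh}` and shear non-metricity `𝒢̌^{abc}` (both symmetric and
g-traceless in their first two indices). -/
theorem shear_equation_equivalence
    (g ginv : Fin 4 → Fin 4 → ℝ)
    (hg : ∀ a b, g a b = g b a)
    (hginv : ∀ a b, ginv a b = ginv b a)
    (hinv : ∀ a b, ∑ c, g a c * ginv c b = if a = b then (1:ℝ) else 0)
    (S G : Fin 4 → Fin 4 → Fin 4 → ℝ)
    (hSsym : ∀ m n h, S m n h = S n m h)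
    (hStr : ∀ h, ∑ m, ∑ n, g m n * S m n h = 0)
    (hGsym : ∀ a b c, G a b c = G b a c)
    (hGtr : ∀ c, ∑ a, ∑ b, g a b * G a b c = 0)
    (u w : Fin 4 → ℝ)
    (hu : ∀ m, u m = ∑ r, ∑ s, G m r s * g r s)
    (hw : ∀ c, w c = ∑ r, ∑ s, S c r s * g r s) :
    (∀ m n h, 2 * S m n h
        = u n * ginv h m + u m * ginv h n - G h n m - G h m n) ↔
    (∀ a b c, G a b c
        = - S b c a - S a c b + S b a c + 1/2 * w c * ginv a b) := by
  constructor
  · intro h1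
    -- First derive u m = w m / 2
    have huw : ∀ m, u m = w m / 2 := by
      intro m
      have h2w : 2 * w m = ∑ r, ∑ s, (2 * S m r s) * g r s := by
        rw [hw, Finset.mul_sum]
        refine Finset.sum_congr rfl fun r _ => ?_
        rw [Finset.mul_sum]
        exact Finset.sum_congr rfl fun s _ => by ring
      have hsub : ∑ r, ∑ s, (2 * S m r s) * g r s
          = ∑ r, ∑ s, ((u r * ginv s m) * g r s + (u m * ginv s r) * g r s
              - G s r m * g r s - G s m r * g r s) := by
        refine Finset.sum_congr rfl fun r _ => Finset.sum_congr rfl fun s _ => ?_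
        rw [h1]; ring
      have hsplit : ∑ r, ∑ s, ((u r * ginv s m) * g r s + (u m * ginv s r) * g r s
              - G s r m * g r s - G s m r * g r s)
          = (∑ r, ∑ s, (u r * ginv s m) * g r s)
            + (∑ r, ∑ s, (u m * ginv s r) * g r s)
            - (∑ r, ∑ s, G s r m * g r s)
            - (∑ r, ∑ s, G s m r * g r s) := by
        simp only [Finset.sum_sub_distrib, Finset.sum_add_distrib]
      have hP1 : ∑ r, ∑ s, (u r * ginv s m) * g r s = u m := by
        have hin : ∀ r : Fin 4, ∑ s, (u r * ginv s m) * g r s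
            = u r * (if r = m then (1:ℝ) else 0) := by
          intro r
          rw [← hinv r m, Finset.mul_sum]
          exact Finset.sum_congr rfl fun s _ => by ring
        rw [Finset.sum_congr rfl fun r _ => hin r]
        simp
      have hP2 : ∑ r, ∑ s, (u m * ginv s r) * g r s = 4 * u m := by
        have hin : ∀ r : Fin 4, ∑ s, (u m * ginv s r) * g r s = u m := by
          intro r
          have : ∑ s, (u m * ginv s r) * g r s = u m * ∑ s, g r s * ginv s r := by
            rw [Finset.mul_sum]
            exact Finset.sum_congr rfl fun s _ => by ring
          rw [this, hinv r r]
          simp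
        rw [Finset.sum_congr rfl fun r _ => hin r]
        simp [Finset.sum_const, Finset.card_univ]
      have hP3 : ∑ r, ∑ s, G s r m * g r s = 0 := by
        calc ∑ r, ∑ s, G s r m * g r s
            = ∑ s, ∑ r, G s r m * g r s := Finset.sum_comm
          _ = ∑ s, ∑ r, g s r * G s r m := by
              exact Finset.sum_congr rfl fun s _ => Finset.sum_congr rfl fun r _ => by
                rw [hg r s]; ring
          _ = 0 := hGtr m
      have hP4 : ∑ r, ∑ s, G s m r * g r s = u m := by
        calc ∑ r, ∑ s, G s m r * g r s
            = ∑ s, ∑ r, G s m r * g r s := Finset.sum_comm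
          _ = ∑ s, ∑ r, G m s r * g s r := by
              exact Finset.sum_congr rfl fun s _ => Finset.sum_congr rfl fun r _ => by
                rw [hGsym s m r, hg r s]
          _ = u m := (hu m).symm
      rw [hsub, hsplit, hP1, hP2, hP3, hP4] at h2w
      linarith
    intro a b c
    have e1 := h1 b c a
    have e2 := h1 a c b
    have e3 := h1 b a c
    linear_combination (1/2) * e1 + (1/2) * e2 - (1/2) * e3
      - (1/2) * hGsym b a c - (1/2) * hGsym a c b - (1/2) * hGsym b c a
      + (1/2) * u c * hginv b a + (1/2) * u b * hginv a c
      + (1/2) * u a * hginv b c + ginv a b * (huw c)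
  · intro h2
    have huw : ∀ m, u m = w m / 2 := by
      intro m
      have hsub : u m = ∑ r, ∑ s, ((- S r s m) * g r s - S m s r * g r s
          + S r m s * g r s + (1/2 * w s * ginv m r) * g r s) := by
        rw [hu]
        refine Finset.sum_congr rfl fun r _ => Finset.sum_congr rfl fun s _ => ?_
        rw [h2]; ring
      have hsplit : ∑ r, ∑ s, ((- S r s m) * g r s - S m s r * g r s
              + S r m s * g r s + (1/2 * w s * ginv m r) * g r s)
          = (∑ r, ∑ s, (- S r s m) * g r s)
            - (∑ r, ∑ s, S m s r * g r s)
            + (∑ r, ∑ s, S r m s * g r s)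
            + (∑ r, ∑ s, (1/2 * w s * ginv m r) * g r s) := by
        simp only [Finset.sum_sub_distrib, Finset.sum_add_distrib]
      have hQ1 : ∑ r, ∑ s, (- S r s m) * g r s = 0 := by
        have : ∑ r, ∑ s, (- S r s m) * g r s = -(∑ r, ∑ s, g r s * S r s m) := by
          rw [← Finset.sum_neg_distrib]
          refine Finset.sum_congr rfl fun r _ => ?_
          rw [← Finset.sum_neg_distrib]
          exact Finset.sum_congr rfl fun s _ => by ring
        rw [this, hStr m, neg_zero]
      have hQ2 : ∑ r, ∑ s, S m s r * g r s = w m := by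
        calc ∑ r, ∑ s, S m s r * g r s
            = ∑ s, ∑ r, S m s r * g r s := Finset.sum_comm
          _ = ∑ s, ∑ r, S m s r * g s r := by
              exact Finset.sum_congr rfl fun s _ => Finset.sum_congr rfl fun r _ => by
                rw [hg r s]
          _ = w m := (hw m).symm
      have hQ3 : ∑ r, ∑ s, S r m s * g r s = w m := by
        rw [hw]
        exact Finset.sum_congr rfl fun r _ => Finset.sum_congr rfl fun s _ => by
          rw [hSsym r m s]
      have hQ4 : ∑ r, ∑ s, (1/2 * w s * ginv m r) * g r s = 1/2 * w m := by
        calc ∑ r, ∑ s, (1/2 * w s * ginv m r) * g r s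
            = ∑ s, ∑ r, (1/2 * w s * ginv m r) * g r s := Finset.sum_comm
          _ = ∑ s, 1/2 * w s * (if s = m then (1:ℝ) else 0) := by
              refine Finset.sum_congr rfl fun s _ => ?_
              rw [← hinv s m, Finset.mul_sum]
              refine Finset.sum_congr rfl fun r _ => ?_
              rw [hg r s, hginv m r]; ring
          _ = 1/2 * w m := by simp
      rw [hsub, hsplit, hQ1, hQ2, hQ3, hQ4]
      ring
    intro m n h
    have e1 := h2 h n m
    have e2 := h2 h m n
    linear_combination e1 + e2 + hSsym m n h - hSsym h m n + hSsym n h m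
      - ginv h m * (huw n) - ginv h n * (huw m)
end

section
/- Let g be a symmetric invertible 4×4 real matrix with inverse entries g^{ab}, and let Š : Fin 4 → Fin 4 → Fin 4 → ℝ be symmetric and g-traceless in its first two indices (Š^{mnh} = Š^{nmh} and ∑ g_{mn} Š^{mnh} = 0). Define 𝒢̌^{abc} = - Š^{bca} - Š^{acb} + Š^{bac} + ½ (∑_{r,s} Š^{crs} g_{rs}) g^{ab}. Then 𝒢̌^{abc} = 0 for all a, b, c if and only if Š^{abc} = 0 for all a, b, c. -/
/-- The source of shear non-metricity is the shear hypermomentum: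
with `𝒢̌^{abc} = -Š^{bca} - Š^{acb} + Š^{bac} + ½ Š^{cr}{}_r g^{ab}`,
one has `𝒢̌ = 0 ⟺ Š = 0`. -/
theorem shear_nonmetricity_vanishes_iff_shear_hypermomentum
    (g ginv : Fin 4 → Fin 4 → ℝ)
    (hg : ∀ a b, g a b = g b a)
    (hinv : ∀ a b, ∑ c, g a c * ginv c b = if a = b then (1:ℝ) else 0)
    (hinv' : ∀ a b, ∑ c, ginv a c * g c b = if a = b then (1:ℝ) else 0)
    (S : Fin 4 → Fin 4 → Fin 4 → ℝ)
    (hSsym : ∀ m n h, S m n h = S n m h)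
    (hStr : ∀ h, ∑ m, ∑ n, g m n * S m n h = 0)
    (G : Fin 4 → Fin 4 → Fin 4 → ℝ)
    (hG : ∀ a b c, G a b c
      = - S b c a - S a c b + S b a c + 1/2 * (∑ r, ∑ s, S c r s * g r s) * ginv a b) :
    (∀ a b c, G a b c = 0) ↔ (∀ a b c, S a b c = 0) := by
  constructor
  · intro hG0
    -- the trace of S
    set T : Fin 4 → ℝ := fun c => ∑ r, ∑ s, S c r s * g r s with hT
    -- ginv is symmetric
    have hsym' : ∀ a b : Fin 4, ∑ c, g a c * ginv b c = if a = b then (1:ℝ) else 0 := by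
      intro a b
      have := hinv' b a
      calc ∑ c, g a c * ginv b c = ∑ c, ginv b c * g c a := by
            apply Finset.sum_congr rfl; intro c _; rw [hg a c]; ring
        _ = if b = a then (1:ℝ) else 0 := hinv' b a
        _ = if a = b then (1:ℝ) else 0 := by simp [eq_comm]
    have hginv_sym : ∀ a b, ginv a b = ginv b a := by
      intro a b
      calc ginv a b = ∑ c, ginv a c * (if c = b then (1:ℝ) else 0) := by
            simp [mul_ite]
        _ = ∑ c, ginv a c * (∑ d, g c d * ginv b d) := by
            apply Finset.sum_congr rfl; intro c _; rw [hsym' c b]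
        _ = ∑ d, (∑ c, ginv a c * g c d) * ginv b d := by
            simp only [Finset.mul_sum, Finset.sum_mul]
            rw [Finset.sum_comm]
            apply Finset.sum_congr rfl; intro d _
            apply Finset.sum_congr rfl; intro c _; ring
        _ = ∑ d, (if a = d then (1:ℝ) else 0) * ginv b d := by
            apply Finset.sum_congr rfl; intro d _; rw [hinv' a d]
        _ = ginv b a := by simp [ite_mul]
    -- the basic equation
    have E : ∀ a b c, - S b c a - S a c b + S b a c + 1/2 * T c * ginv a b = 0 := by
      intro a b c
      have h := hG0 a b c
      rw [hG a b c] at h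
      linarith [h]
    -- solve for S
    have key : ∀ a b c, S a b c = 1/4 * (T a * ginv b c + T b * ginv a c) := by
      intro a b c
      have e2 := E b c a
      have e3 := E c a b
      rw [hSsym c a b, hSsym b a c, hSsym c b a] at e2
      rw [hSsym c b a, hginv_sym c a] at e3
      linarith [e2, e3]
    -- contract with g to kill T
    have hTr : ∀ c, T c = 0 := by
      intro c
      have e2 : ∀ n : Fin 4, ∑ m, g m n * ginv m c = if n = c then (1:ℝ) else 0 := by
        intro n
        rw [← hinv n c]
        apply Finset.sum_congr rfl; intro m _; rw [hg m n]
      have habs : (∑ m, ∑ n, g m n * S m n c) = 1/2 * T c := by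
        calc ∑ m, ∑ n, g m n * S m n c
            = ∑ m, ∑ n, (1/4 * (T m * (g m n * ginv n c))
                + 1/4 * (T n * (g m n * ginv m c))) := by
              apply Finset.sum_congr rfl; intro m _
              apply Finset.sum_congr rfl; intro n _
              rw [key m n c]; ring
          _ = (∑ m, ∑ n, 1/4 * (T m * (g m n * ginv n c)))
              + ∑ m, ∑ n, 1/4 * (T n * (g m n * ginv m c)) := by
              rw [← Finset.sum_add_distrib]
              apply Finset.sum_congr rfl; intro m _
              rw [Finset.sum_add_distrib]
          _ = 1/2 * T c := by
              have A : (∑ m, ∑ n, 1/4 * (T m * (g m n * ginv n c))) = 1/4 * T c := by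
                have h1 : ∀ m : Fin 4, (∑ n, 1/4 * (T m * (g m n * ginv n c)))
                    = 1/4 * T m * (if m = c then (1:ℝ) else 0) := by
                  intro m
                  rw [show (∑ n, 1/4 * (T m * (g m n * ginv n c)))
                      = 1/4 * T m * ∑ n, g m n * ginv n c by
                    rw [Finset.mul_sum]
                    apply Finset.sum_congr rfl; intro n _; ring]
                  rw [hinv m c]
                simp only [h1, mul_ite, mul_one, mul_zero]
                simp
              have B : (∑ m, ∑ n, 1/4 * (T n * (g m n * ginv m c))) = 1/4 * T c := by
                rw [Finset.sum_comm]
                have h1 : ∀ n : Fin 4, (∑ m, 1/4 * (T n * (g m n * ginv m c)))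
                    = 1/4 * T n * (if n = c then (1:ℝ) else 0) := by
                  intro n
                  rw [show (∑ m, 1/4 * (T n * (g m n * ginv m c)))
                      = 1/4 * T n * ∑ m, g m n * ginv m c by
                    rw [Finset.mul_sum]
                    apply Finset.sum_congr rfl; intro m _; ring]
                  rw [e2 n]
                simp only [h1, mul_ite, mul_one, mul_zero]
                simp
              rw [A, B]; ring
      have h0 := hStr c
      rw [habs] at h0
      linarith
    intro a b c
    rw [key a b c, hTr a, hTr b]
    ring
  · intro hS a b c
    rw [hG]
    simp [hS]
end

section
/- Let g be a symmetric invertible 4×4 real matrix with entries g_{ab} and inverse entries g^{ab}, and let 𝒢 : Fin 4 → Fin 4 → Fin 4 → ℝ be symmetric in its first two indices. Define the Weyl form 𝒢_c = ∑_{a,b} g^{ab} 𝒢_{abc} and the shear non-metricity 𝒢̌_{abc} = 𝒢_{abc} - ¼ 𝒢_c g_{ab}. With all raised indices obtained by contraction with g^{··} (e.g. 𝒢^{uvz} = ∑ g^{ua} g^{vb} g^{zc} 𝒢_{abc}, and 𝒢^{rs}{}_s = ∑_s of 𝒢 with first two indices raised and second index contracted against the third), the following identity holds: - ¼ ∑ 𝒢^{rs}{}_s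 𝒢_r{}^t{}_t + ¼ ∑ 𝒢^{uvz} 𝒢_{uzv} = - ¼ ∑ 𝒢̌^{rs}{}_s 𝒢̌_r{}^t{}_t + ¼ ∑ 𝒢̌^{uvz} 𝒢̌_{uzv}. -/
/-- The non-metricity quadratic scalar
`-¼ 𝒢^{rs}{}_s 𝒢_r{}^t{}_t + ¼ 𝒢^{uvz} 𝒢_{uzv}` of the Lagrangian `ℒ_λ`,
where indices are raised with `ginv`. -/
noncomputable def nonmetricityQuad (ginv : Fin 4 → Fin 4 → ℝ)
    (X : Fin 4 → Fin 4 → Fin 4 → ℝ) : ℝ :=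
  - 1/4 * ∑ r, (∑ a, ∑ b, ∑ s, ginv r a * ginv s b * X a b s)
      * (∑ t, ∑ c, ginv t c * X r c t)
  + 1/4 * ∑ u, ∑ v, ∑ z,
      (∑ a, ∑ b, ∑ c, ginv u a * ginv v b * ginv z c * X a b c) * X u z v

/-- In the quadratic non-metricity part of `ℒ_λ` the non-metricity `𝒢` can be
replaced by the shear non-metricity `𝒢̌_{abc} = 𝒢_{abc} - ¼ 𝒢_c g_{ab}`. -/
theorem nonmetricity_quad_shear_identity
    (g ginv : Fin 4 → Fin 4 → ℝ)
    (hg : ∀ a b, g a b = g b a)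
    (hinv : ∀ a b, ∑ c, g a c * ginv c b = if a = b then (1:ℝ) else 0)
    (hinv' : ∀ a b, ∑ c, ginv a c * g c b = if a = b then (1:ℝ) else 0)
    (𝒢 : Fin 4 → Fin 4 → Fin 4 → ℝ)
    (h𝒢 : ∀ a b c, 𝒢 a b c = 𝒢 b a c)
    (W : Fin 4 → ℝ)
    (hW : ∀ c, W c = ∑ a, ∑ b, ginv a b * 𝒢 a b c)
    (Sh : Fin 4 → Fin 4 → Fin 4 → ℝ)
    (hSh : ∀ a b c, Sh a b c = 𝒢 a b c - 1/4 * W c * g a b) :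
    nonmetricityQuad ginv 𝒢 = nonmetricityQuad ginv Sh := by
  classical
  -- contraction identities
  have hC1 : ∀ s a : Fin 4, (∑ b, ginv s b * g a b) = if s = a then (1:ℝ) else 0 := by
    intro s a
    have h : (∑ b, ginv s b * g a b) = ∑ b, ginv s b * g b a :=
      Finset.sum_congr rfl fun b _ => by rw [hg a b]
    rw [h, hinv' s a]
  have hC3 : ∀ z a : Fin 4, (∑ u, g u z * ginv u a) = if z = a then (1:ℝ) else 0 := by
    intro z a
    have h : (∑ u, g u z * ginv u a) = ∑ u, g z u * ginv u a :=
      Finset.sum_congr rfl fun u _ => by rw [hg u z]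
    rw [h, hinv z a]
  have hBTA : ∀ a b : Fin 4, (∑ c, ginv c a * g c b) = if a = b then (1:ℝ) else 0 := by
    intro a b
    have h : (∑ c, ginv c a * g c b) = ∑ c, g b c * ginv c a :=
      Finset.sum_congr rfl fun c _ => by rw [hg c b]; ring
    rw [h, hinv b a]
    simp [eq_comm]
  -- symmetry of the inverse metric
  have gsym : ∀ a b : Fin 4, ginv a b = ginv b a := by
    intro a b
    have h1 : ∑ d, (∑ c, ginv c a * g c d) * ginv d b = ginv a b := by
      simp only [hBTA]
      simp
    have h2 : ∑ d, (∑ c, ginv c a * g c d) * ginv d b = ginv b a := by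
      have e : ∀ d ∈ (Finset.univ : Finset (Fin 4)), (∑ c, ginv c a * g c d) * ginv d b
          = ∑ c, ginv c a * (g c d * ginv d b) := fun d _ => by
        rw [Finset.sum_mul]
        exact Finset.sum_congr rfl fun c _ => by ring
      rw [Finset.sum_congr rfl e, Finset.sum_comm]
      have e2 : ∀ c ∈ (Finset.univ : Finset (Fin 4)), (∑ d, ginv c a * (g c d * ginv d b))
          = ginv c a * (if c = b then (1:ℝ) else 0) := fun c _ => by
        rw [← Finset.mul_sum, hinv c b]
      rw [Finset.sum_congr rfl e2]
      simp
    rw [← h1, h2]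
  -- abbreviations
  set M : Fin 4 → ℝ := fun r => ∑ t, ∑ c, ginv t c * 𝒢 r c t with hM
  set Mu : Fin 4 → ℝ := fun r => ∑ a, ginv r a * M a with hMu
  set Wu : Fin 4 → ℝ := fun r => ∑ a, ginv r a * W a with hWu
  set P : Fin 4 → Fin 4 → Fin 4 → ℝ :=
    fun u v z => ∑ a, ∑ b, ∑ c, ginv u a * ginv v b * ginv z c * 𝒢 a b c with hP
  set T : ℝ := ∑ b, Wu b * M b with hT
  set Q : ℝ := ∑ b, Wu b * W b with hQ
  -- the mixed trace in canonical form
  have hMeq : ∀ z, (∑ u, ∑ v, ginv u v * 𝒢 z u v) = M z := by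
    intro z
    have e : ∀ u ∈ (Finset.univ : Finset (Fin 4)), (∑ v, ginv u v * 𝒢 z u v)
        = ∑ v, ginv v u * 𝒢 z u v :=
      fun u _ => Finset.sum_congr rfl fun v _ => by rw [gsym u v]
    rw [Finset.sum_congr rfl e, Finset.sum_comm]
  -- first factor with 𝒢
  have hA : ∀ r, (∑ a, ∑ b, ∑ s, ginv r a * ginv s b * 𝒢 a b s) = Mu r := by
    intro r
    simp only [hMu, hM]
    refine Finset.sum_congr rfl fun a _ => ?_
    rw [Finset.sum_comm, Finset.mul_sum]
    refine Finset.sum_congr rfl fun s _ => ?_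
    rw [Finset.mul_sum]
    exact Finset.sum_congr rfl fun b _ => by ring
  have hWc : ∀ r, (∑ a, ∑ b, ∑ s, ginv r a * ginv s b * (W s * g a b)) = Wu r := by
    intro r
    simp only [hWu]
    refine Finset.sum_congr rfl fun a _ => ?_
    rw [Finset.sum_comm]
    have e : ∀ s ∈ (Finset.univ : Finset (Fin 4)), (∑ b, ginv r a * ginv s b * (W s * g a b))
        = (ginv r a * W s) * (if s = a then (1:ℝ) else 0) := fun s _ => by
      rw [← hC1 s a, Finset.mul_sum]
      exact Finset.sum_congr rfl fun b _ => by ring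
    rw [Finset.sum_congr rfl e]
    simp
  have hASh : ∀ r, (∑ a, ∑ b, ∑ s, ginv r a * ginv s b * Sh a b s) = Mu r - 1/4 * Wu r := by
    intro r
    have e : ∀ a ∈ (Finset.univ : Finset (Fin 4)), (∑ b, ∑ s, ginv r a * ginv s b * Sh a b s)
        = (∑ b, ∑ s, ginv r a * ginv s b * 𝒢 a b s)
          - 1/4 * (∑ b, ∑ s, ginv r a * ginv s b * (W s * g a b)) := fun a _ => by
      rw [Finset.mul_sum, ← Finset.sum_sub_distrib]
      refine Finset.sum_congr rfl fun b _ => ?_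
      rw [Finset.mul_sum, ← Finset.sum_sub_distrib]
      refine Finset.sum_congr rfl fun s _ => ?_
      rw [hSh]; ring
    rw [Finset.sum_congr rfl e, Finset.sum_sub_distrib, ← Finset.mul_sum]
    have := hA r
    have := hWc r
    rw [hA r, hWc r]
  have hBSh : ∀ r, (∑ t, ∑ c, ginv t c * Sh r c t) = M r - 1/4 * W r := by
    intro r
    have e : ∀ t ∈ (Finset.univ : Finset (Fin 4)), (∑ c, ginv t c * Sh r c t)
        = (∑ c, ginv t c * 𝒢 r c t) - 1/4 * W t * (if t = r then (1:ℝ) else 0) := fun t _ => by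
      rw [← hC1 t r, Finset.mul_sum, ← Finset.sum_sub_distrib]
      refine Finset.sum_congr rfl fun c _ => ?_
      rw [hSh]; ring
    rw [Finset.sum_congr rfl e, Finset.sum_sub_distrib]
    simp only [hM]
    congr 1
    simp
  have hT1 : (∑ r, Mu r * W r) = T := by
    simp only [hMu, hT, hWu]
    have e : ∀ r ∈ (Finset.univ : Finset (Fin 4)), (∑ a, ginv r a * M a) * W r
        = ∑ a, (ginv a r * W r) * M a := fun r _ => by
      rw [Finset.sum_mul]
      exact Finset.sum_congr rfl fun a _ => by rw [gsym r a]; ring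
    rw [Finset.sum_congr rfl e, Finset.sum_comm]
    refine Finset.sum_congr rfl fun a _ => ?_
    rw [Finset.sum_mul]
  have hSum1 : (∑ r, (Mu r - 1/4 * Wu r) * (M r - 1/4 * W r))
      = (∑ r, Mu r * M r) - 1/4 * T - 1/4 * T + 1/16 * Q := by
    have e : ∀ r ∈ (Finset.univ : Finset (Fin 4)), (Mu r - 1/4 * Wu r) * (M r - 1/4 * W r)
        = Mu r * M r - 1/4 * (Mu r * W r) - 1/4 * (Wu r * M r) + 1/16 * (Wu r * W r) :=
      fun r _ => by ring
    rw [Finset.sum_congr rfl e]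
    rw [Finset.sum_add_distrib, Finset.sum_sub_distrib, Finset.sum_sub_distrib,
        ← Finset.mul_sum, ← Finset.mul_sum, ← Finset.mul_sum, hT1, ← hT, ← hQ]
  have hguv : ∀ u v : Fin 4, (∑ a, ∑ b, ginv u a * ginv v b * g a b) = ginv u v := by
    intro u v
    have e : ∀ a ∈ (Finset.univ : Finset (Fin 4)), (∑ b, ginv u a * ginv v b * g a b)
        = ginv u a * (if v = a then (1:ℝ) else 0) := fun a _ => by
      rw [← hC1 v a, Finset.mul_sum]
      exact Finset.sum_congr rfl fun b _ => by ring
    rw [Finset.sum_congr rfl e]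
    simp
  have hWpart : ∀ u v z, (∑ a, ∑ b, ∑ c, ginv u a * ginv v b * ginv z c * (W c * g a b))
      = ginv u v * Wu z := by
    intro u v z
    have e : ∀ a ∈ (Finset.univ : Finset (Fin 4)),
        (∑ b, ∑ c, ginv u a * ginv v b * ginv z c * (W c * g a b))
        = (∑ b, ginv u a * ginv v b * g a b) * Wu z := fun a _ => by
      rw [Finset.sum_mul]
      refine Finset.sum_congr rfl fun b _ => ?_
      simp only [hWu]
      rw [Finset.mul_sum]
      exact Finset.sum_congr rfl fun c _ => by ring
    rw [Finset.sum_congr rfl e, ← Finset.sum_mul, hguv]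
  have hCSh : ∀ u v z, (∑ a, ∑ b, ∑ c, ginv u a * ginv v b * ginv z c * Sh a b c)
      = P u v z - 1/4 * (ginv u v * Wu z) := by
    intro u v z
    have e : ∀ a ∈ (Finset.univ : Finset (Fin 4)),
        (∑ b, ∑ c, ginv u a * ginv v b * ginv z c * Sh a b c)
        = (∑ b, ∑ c, ginv u a * ginv v b * ginv z c * 𝒢 a b c)
          - 1/4 * (∑ b, ∑ c, ginv u a * ginv v b * ginv z c * (W c * g a b)) := fun a _ => by
      rw [Finset.mul_sum, ← Finset.sum_sub_distrib]
      refine Finset.sum_congr rfl fun b _ => ?_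
      rw [Finset.mul_sum, ← Finset.sum_sub_distrib]
      refine Finset.sum_congr rfl fun c _ => ?_
      rw [hSh]; ring
    rw [Finset.sum_congr rfl e, Finset.sum_sub_distrib, ← Finset.mul_sum, hWpart]
  have hgP : ∀ v z, (∑ u, P u v z * g u z)
      = ∑ b, ∑ c, ginv v b * ginv z c * 𝒢 z b c := by
    intro v z
    simp only [hP]
    have e1 : ∀ u ∈ (Finset.univ : Finset (Fin 4)),
        (∑ a, ∑ b, ∑ c, ginv u a * ginv v b * ginv z c * 𝒢 a b c) * g u z
        = ∑ a, ∑ b, ∑ c, (g u z * ginv u a) * (ginv v b * ginv z c * 𝒢 a b c) := fun u _ => by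
      rw [Finset.sum_mul]
      refine Finset.sum_congr rfl fun a _ => ?_
      rw [Finset.sum_mul]
      refine Finset.sum_congr rfl fun b _ => ?_
      rw [Finset.sum_mul]
      exact Finset.sum_congr rfl fun c _ => by ring
    rw [Finset.sum_congr rfl e1, Finset.sum_comm]
    have e2 : ∀ a ∈ (Finset.univ : Finset (Fin 4)),
        (∑ u, ∑ b, ∑ c, (g u z * ginv u a) * (ginv v b * ginv z c * 𝒢 a b c))
        = (if z = a then (1:ℝ) else 0) * (∑ b, ∑ c, ginv v b * ginv z c * 𝒢 a b c) := fun a _ => by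
      rw [← hC3 z a, Finset.sum_mul]
      refine Finset.sum_congr rfl fun u _ => ?_
      rw [Finset.mul_sum]
      refine Finset.sum_congr rfl fun b _ => ?_
      rw [Finset.mul_sum]
    rw [Finset.sum_congr rfl e2]
    simp
  have hKv : ∀ v, (∑ z, ∑ b, ∑ c, ginv v b * ginv z c * 𝒢 z b c) = ∑ b, ginv v b * M b := by
    intro v
    rw [Finset.sum_comm]
    refine Finset.sum_congr rfl fun b _ => ?_
    rw [← hMeq b, Finset.mul_sum]
    refine Finset.sum_congr rfl fun z _ => ?_
    rw [Finset.mul_sum]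
    refine Finset.sum_congr rfl fun c _ => ?_
    rw [h𝒢 z b c]
    ring
  have hE2 : (∑ u, ∑ v, ∑ z, P u v z * (W v * g u z)) = T := by
    rw [Finset.sum_comm]
    have e : ∀ v ∈ (Finset.univ : Finset (Fin 4)), (∑ u, ∑ z, P u v z * (W v * g u z))
        = W v * (∑ b, ginv v b * M b) := fun v _ => by
      have e1 : ∀ u ∈ (Finset.univ : Finset (Fin 4)),
          (∑ z, P u v z * (W v * g u z)) = ∑ z, W v * (P u v z * g u z) :=
        fun u _ => Finset.sum_congr rfl fun z _ => by ring
      rw [Finset.sum_congr rfl e1, Finset.sum_comm, ← hKv v, Finset.mul_sum]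
      refine Finset.sum_congr rfl fun z _ => ?_
      rw [← Finset.mul_sum, hgP v z]
    rw [Finset.sum_congr rfl e]
    simp only [hT, hWu]
    have e2 : ∀ v ∈ (Finset.univ : Finset (Fin 4)), W v * (∑ b, ginv v b * M b)
        = ∑ b, (ginv b v * W v) * M b := fun v _ => by
      rw [Finset.mul_sum]
      exact Finset.sum_congr rfl fun b _ => by rw [gsym v b]; ring
    rw [Finset.sum_congr rfl e2, Finset.sum_comm]
    refine Finset.sum_congr rfl fun b _ => ?_
    rw [Finset.sum_mul]
  have hE3 : (∑ u, ∑ v, ∑ z, (ginv u v * Wu z) * 𝒢 u z v) = T := by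
    have e : ∀ u ∈ (Finset.univ : Finset (Fin 4)), (∑ v, ∑ z, (ginv u v * Wu z) * 𝒢 u z v)
        = ∑ z, ∑ v, (ginv u v * Wu z) * 𝒢 u z v := fun u _ => Finset.sum_comm
    rw [Finset.sum_congr rfl e, Finset.sum_comm]
    simp only [hT]
    refine Finset.sum_congr rfl fun z _ => ?_
    rw [← hMeq z, Finset.mul_sum]
    refine Finset.sum_congr rfl fun u _ => ?_
    rw [Finset.mul_sum]
    refine Finset.sum_congr rfl fun v _ => ?_
    rw [h𝒢 u z v]; ring
  have hE4 : (∑ u, ∑ v, ∑ z, (ginv u v * Wu z) * (W v * g u z)) = Q := by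
    have e : ∀ u ∈ (Finset.univ : Finset (Fin 4)),
        (∑ v, ∑ z, (ginv u v * Wu z) * (W v * g u z))
        = ∑ z, ∑ v, (ginv u v * Wu z) * (W v * g u z) := fun u _ => Finset.sum_comm
    rw [Finset.sum_congr rfl e, Finset.sum_comm]
    have e2 : ∀ z ∈ (Finset.univ : Finset (Fin 4)),
        (∑ u, ∑ v, (ginv u v * Wu z) * (W v * g u z))
        = ∑ v, (Wu z * W v) * (if v = z then (1:ℝ) else 0) := fun z _ => by
      rw [Finset.sum_comm]
      refine Finset.sum_congr rfl fun v _ => ?_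
      rw [← hinv' v z, Finset.mul_sum]
      refine Finset.sum_congr rfl fun u _ => ?_
      rw [gsym u v]; ring
    rw [Finset.sum_congr rfl e2]
    simp only [hQ]
    simp
  have hSecSh : (∑ u, ∑ v, ∑ z,
        (∑ a, ∑ b, ∑ c, ginv u a * ginv v b * ginv z c * Sh a b c) * Sh u z v)
      = (∑ u, ∑ v, ∑ z, P u v z * 𝒢 u z v) - 1/4 * T - 1/4 * T + 1/16 * Q := by
    have e : (∑ u, ∑ v, ∑ z,
        (∑ a, ∑ b, ∑ c, ginv u a * ginv v b * ginv z c * Sh a b c) * Sh u z v)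
      = ∑ u, ∑ v, ∑ z, (P u v z * 𝒢 u z v
          - 1/4 * (P u v z * (W v * g u z))
          - 1/4 * ((ginv u v * Wu z) * 𝒢 u z v)
          + 1/16 * ((ginv u v * Wu z) * (W v * g u z))) := by
      refine Finset.sum_congr rfl fun u _ => Finset.sum_congr rfl fun v _ =>
        Finset.sum_congr rfl fun z _ => ?_
      rw [hCSh u v z, hSh u z v]
      ring
    rw [e]
    simp only [Finset.sum_add_distrib, Finset.sum_sub_distrib, ← Finset.mul_sum]
    rw [hE2, hE3, hE4]
  -- assemble
  simp only [nonmetricityQuad]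
  have hL1 : (∑ r, (∑ a, ∑ b, ∑ s, ginv r a * ginv s b * 𝒢 a b s)
        * (∑ t, ∑ c, ginv t c * 𝒢 r c t))
      = ∑ r, Mu r * M r := by
    refine Finset.sum_congr rfl fun r _ => ?_
    rw [hA r]
  have hR1 : (∑ r, (∑ a, ∑ b, ∑ s, ginv r a * ginv s b * Sh a b s)
        * (∑ t, ∑ c, ginv t c * Sh r c t))
      = (∑ r, Mu r * M r) - 1/4 * T - 1/4 * T + 1/16 * Q := by
    rw [← hSum1]
    refine Finset.sum_congr rfl fun r _ => ?_
    rw [hASh r, hBSh r]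
  have hL2 : (∑ u, ∑ v, ∑ z,
        (∑ a, ∑ b, ∑ c, ginv u a * ginv v b * ginv z c * 𝒢 a b c) * 𝒢 u z v)
      = ∑ u, ∑ v, ∑ z, P u v z * 𝒢 u z v := by
    simp only [hP]
  rw [hL1, hR1, hL2, hSecSh]
  ring
end
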